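/- Let (W_n)_{n≥0} be a sequence in ℓ²(ℤ^d; H) with ‖W_0‖ = 1 evolving by W_{n+1}(x) = ∑_{ε ∈ Λ^d} C_n^{(ε)} W_n(x − ε) (the d-dimensional QBN walk), and let (ω^{(n)})_{n≥0} satisfy ω^{(n+1)} = 𝔍_n^{(d)} ω^{(n)} (the nucleus sequence of the d-dimensional open QBN walk). If ω^{(0)}(x) = |W_0(x)⟩⟨W_0(x)| for all x ∈ ℤ^d, then for every n ≥ 0 and every x ∈ ℤ^d one has Tr[ω^{(n)}(x)] = ‖W_n(x)‖²; that is, the two walks have identical probability distributions at every time. -/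

import Mathlib

/- Common setup: quantum Bernoulli noises on `ℋ = ℓ²(Γ)`, `Γ` = finite subsets of `ℕ`. -/

noncomputable section

open ContinuousLinearMap Filter

/-- The space `ℋ = ℓ²(Γ)` of square-integrable Bernoulli functionals,
where `Γ` is the set of finite subsets of `ℕ`. -/
abbrev ℋ : Type := lp (fun _ : Finset ℕ => ℂ) 2

/-- The canonical orthonormal basis `{Z_σ : σ ∈ Γ}` of `ℋ`. -/
def Z (σ : Finset ℕ) : ℋ := lp.single 2 σ 1

/-- `QBN a` says that `a k` is the annihilation operator `∂_k` acting on Bernoulli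
functionals: `∂_k Z_σ = 1_σ(k) Z_{σ\k}` and `∂_k* Z_σ = (1 - 1_σ(k)) Z_{σ∪k}`. -/
def QBN (a : ℕ → ℋ →L[ℂ] ℋ) : Prop :=
  (∀ (k : ℕ) (σ : Finset ℕ), a k (Z σ) = if k ∈ σ then Z (σ.erase k) else 0) ∧
  (∀ (k : ℕ) (σ : Finset ℕ), adjoint (a k) (Z σ) = if k ∈ σ then 0 else Z (insert k σ))

/-- `L_n = (∂_n* + ∂_n - I)/2`. -/
def Lop (a : ℕ → ℋ →L[ℂ] ℋ) (n : ℕ) : ℋ →L[ℂ] ℋ := (2 : ℂ)⁻¹ • (adjoint (a n) + a n - 1)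

/-- `R_n = (∂_n* + ∂_n + I)/2`. -/
def Rop (a : ℕ → ℋ →L[ℂ] ℋ) (n : ℕ) : ℋ →L[ℂ] ℋ := (2 : ℂ)⁻¹ • (adjoint (a n) + a n + 1)

/-- `Λ = {-1, 1} ⊆ ℤ`. -/
def Lam : Finset ℤ := {-1, 1}

/-- `Λ^d`, as a finite set of vectors in `ℤ^d`. -/
def LamD (d : ℕ) : Finset (Fin d → ℤ) := Fintype.piFinset fun _ => Lam

/-- `B_n^{(ε)}`: equals `L_n` if `ε = -1` and `R_n` if `ε = +1`. -/
def Bop (a : ℕ → ℋ →L[ℂ] ℋ) (n : ℕ) (e : ℤ) : ℋ →L[ℂ] ℋ :=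
  if e = -1 then Lop a n else Rop a n

/-- A characterization of the `d`-fold Hilbert-space tensor power of `Hs`:
`tpv` is the multilinear map `(u_1, …, u_d) ↦ u_1 ⊗ ⋯ ⊗ u_d`, which satisfies
`⟪⊗u_j, ⊗v_j⟫ = ∏ ⟪u_j, v_j⟫` and has dense span, and `tp` sends a `d`-tuple of bounded
operators to their tensor product operator, i.e. `(⊗A_j)(⊗u_j) = ⊗(A_j u_j)`. -/
def IsTensorD {Hs : Type} [NormedAddCommGroup Hs] [InnerProductSpace ℂ Hs]
    {d : ℕ} {Hd : Type} [NormedAddCommGroup Hd] [InnerProductSpace ℂ Hd]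
    (tpv : MultilinearMap ℂ (fun _ : Fin d => Hs) Hd)
    (tp : (Fin d → Hs →L[ℂ] Hs) → (Hd →L[ℂ] Hd)) : Prop :=
  (∀ u v : Fin d → Hs, (@inner ℂ _ _ (tpv u) (tpv v)) = ∏ j, (@inner ℂ _ _ (u j) (v j))) ∧
  ((Submodule.span ℂ (Set.range fun u => tpv u)).topologicalClosure = ⊤) ∧
  (∀ (A : Fin d → Hs →L[ℂ] Hs) (u : Fin d → Hs), tp A (tpv u) = tpv fun j => A j (u j))

/-- Conjugation of an operator by a unitary isomorphism `K`: `T ↦ K T K⁻¹`. -/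
def conjK {Hs Hd : Type} [NormedAddCommGroup Hs] [InnerProductSpace ℂ Hs]
    [NormedAddCommGroup Hd] [InnerProductSpace ℂ Hd]
    (K : Hd ≃ₗᵢ[ℂ] Hs) (T : Hd →L[ℂ] Hd) : Hs →L[ℂ] Hs :=
  K.toLinearIsometry.toContinuousLinearMap ∘L T ∘L K.symm.toLinearIsometry.toContinuousLinearMap

/-- `C_n^{(ε)} = K (B_n^{(ε_1)} ⊗ ⋯ ⊗ B_n^{(ε_d)}) K⁻¹` for `ε ∈ Λ^d`. -/
def Cop {d : ℕ} {Hd : Type} [NormedAddCommGroup Hd] [InnerProductSpace ℂ Hd]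
    (a : ℕ → ℋ →L[ℂ] ℋ) (tp : (Fin d → ℋ →L[ℂ] ℋ) → (Hd →L[ℂ] Hd))
    (K : Hd ≃ₗᵢ[ℂ] ℋ) (n : ℕ) (v : Fin d → ℤ) : ℋ →L[ℂ] ℋ :=
  conjK K (tp fun j => Bop a n (v j))

/-- The trace of an operator computed relative to an orthonormal basis `b`:
`Tr T = ∑_i Re ⟪b i, T (b i)⟫` (for positive operators this is the genuine trace). -/
def trB {E : Type} [NormedAddCommGroup E] [InnerProductSpace ℂ E] {ι : Type}
    (b : ι → E) (T : E →L[ℂ] E) : ℝ :=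
  ∑' i, (@inner ℂ _ _ (b i) (T (b i))).re

/-- Finiteness (summability) of the trace of `T` relative to the orthonormal basis `b`;
for a positive operator `T` this says exactly that `T` is of trace class. -/
def HasFiniteTrace {E : Type} [NormedAddCommGroup E] [InnerProductSpace ℂ E] {ι : Type}
    (b : ι → E) (T : E →L[ℂ] E) : Prop :=
  Summable fun i => (@inner ℂ _ _ (b i) (T (b i))).re

/-- The trace on `ℋ`, computed in the canonical ONB `{Z_σ}`. -/
def trH : (ℋ →L[ℂ] ℋ) → ℝ := trB Z

/-- A nucleus with site space `X` on a Hilbert space with orthonormal basis `b`: a family of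
positive trace-class operators `ω x` with `∑_x Tr[ω x] = 1`. -/
def IsNucleusOn {E : Type} [NormedAddCommGroup E] [InnerProductSpace ℂ E] [CompleteSpace E]
    {ι X : Type} (b : ι → E) (ω : X → E →L[ℂ] E) : Prop :=
  (∀ x, (ω x).IsPositive) ∧ (∀ x, HasFiniteTrace b (ω x)) ∧ HasSum (fun x => trB b (ω x)) 1

/-- The one-dimensional map `𝔍_n`: `(𝔍_n ρ)(x) = L_n ρ(x+1) L_n + R_n ρ(x-1) R_n`. -/
def Jmap1 (a : ℕ → ℋ →L[ℂ] ℋ) (n : ℕ) (ρ : ℤ → ℋ →L[ℂ] ℋ) : ℤ → ℋ →L[ℂ] ℋ :=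
  fun x => Lop a n * ρ (x + 1) * Lop a n + Rop a n * ρ (x - 1) * Rop a n

/-- The `d`-dimensional map `𝔍_n^{(d)}`:
`(𝔍_n^{(d)} ω)(x) = ∑_{ε ∈ Λ^d} C_n^{(ε)} ω(x-ε) C_n^{(ε)}`. -/
def JmapD {d : ℕ} {Hd : Type} [NormedAddCommGroup Hd] [InnerProductSpace ℂ Hd]
    (a : ℕ → ℋ →L[ℂ] ℋ) (tp : (Fin d → ℋ →L[ℂ] ℋ) → (Hd →L[ℂ] Hd)) (K : Hd ≃ₗᵢ[ℂ] ℋ)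
    (n : ℕ) (ω : (Fin d → ℤ) → ℋ →L[ℂ] ℋ) : (Fin d → ℤ) → ℋ →L[ℂ] ℋ :=
  fun x => ∑ v ∈ LamD d, Cop a tp K n v * ω (x - v) * Cop a tp K n v

/-- The sequence `ρ⁽⁰⁾ = ρ`, `ρ⁽ⁿ⁺¹⁾ = 𝔍_n ρ⁽ⁿ⁾` generated by `ρ` and `(𝔍_n)`. -/
def seqJ (a : ℕ → ℋ →L[ℂ] ℋ) (ρ : ℤ → ℋ →L[ℂ] ℋ) : ℕ → ℤ → ℋ →L[ℂ] ℋ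
  | 0 => ρ
  | n + 1 => Jmap1 a n (seqJ a ρ n)

/-- Regularity of a 1-dimensional nucleus `ρ`:
`lim_n ∑_x e^{itx/√n} Tr[ρ⁽ⁿ⁾(x)] = e^{-t²/2}` for every real `t`. -/
def Regular (a : ℕ → ℋ →L[ℂ] ℋ) (ρ : ℤ → ℋ →L[ℂ] ℋ) : Prop :=
  ∀ t : ℝ, Tendsto (fun n : ℕ => ∑' x : ℤ,
      Complex.exp (Complex.I * (t : ℂ) * (x : ℂ) / (Real.sqrt n : ℂ)) * (trH (seqJ a ρ n x) : ℂ))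
    atTop (nhds (Complex.exp (-(t : ℂ) ^ 2 / 2)))

/-- The rank-one (Dirac) operator `|u⟩⟨v| : w ↦ ⟪v, w⟫ u`. -/
def dyad {E : Type} [NormedAddCommGroup E] [InnerProductSpace ℂ E] (u v : E) : E →L[ℂ] E :=
  (toSpanSingleton ℂ u).comp (innerSL ℂ v)

/-- `ℓ²(ℤ^d)`. -/
abbrev l2Z (d : ℕ) : Type := lp (fun _ : Fin d → ℤ => ℂ) 2

/-- The canonical orthonormal basis `{δ_x : x ∈ ℤ^d}` of `ℓ²(ℤ^d)`. -/
def deltaV {d : ℕ} (x : Fin d → ℤ) : l2Z d := lp.single 2 x 1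

/-- A characterization of the Hilbert-space tensor product `E = ℓ²(ℤ^d) ⊗ Hs`:
`tv` is the bilinear map `(f, u) ↦ f ⊗ u`, with `⟪f⊗u, g⊗v⟫ = ⟪f,g⟫⟪u,v⟫` and dense span,
and `top2` sends a pair of bounded operators to their tensor product operator:
`(A ⊗ B)(f ⊗ u) = (A f) ⊗ (B u)`. -/
def IsTensor2 {d : ℕ} {Hs E : Type} [NormedAddCommGroup Hs] [InnerProductSpace ℂ Hs]
    [NormedAddCommGroup E] [InnerProductSpace ℂ E]
    (tv : l2Z d →ₗ[ℂ] Hs →ₗ[ℂ] E)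
    (top2 : (l2Z d →L[ℂ] l2Z d) → (Hs →L[ℂ] Hs) → (E →L[ℂ] E)) : Prop :=
  (∀ (f g : l2Z d) (u v : Hs),
      (@inner ℂ _ _ (tv f u) (tv g v)) = (@inner ℂ _ _ f g) * (@inner ℂ _ _ u v)) ∧
  ((Submodule.span ℂ {z : E | ∃ f u, z = tv f u}).topologicalClosure = ⊤) ∧
  (∀ (A : l2Z d →L[ℂ] l2Z d) (B : Hs →L[ℂ] Hs) (f : l2Z d) (u : Hs),
      top2 A B (tv f u) = tv (A f) (B u))

/-- The orthonormal basis `{δ_x ⊗ b_κ}` of the tensor product `ℓ²(ℤ^d) ⊗ Hs` induced by the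
canonical basis of `ℓ²(ℤ^d)` and an orthonormal basis `b` of `Hs`. -/
def tbasis {d : ℕ} {Hs E : Type} [NormedAddCommGroup Hs] [InnerProductSpace ℂ Hs]
    [NormedAddCommGroup E] [InnerProductSpace ℂ E]
    (tv : l2Z d →ₗ[ℂ] Hs →ₗ[ℂ] E) {κ : Type} (b : κ → Hs) : (Fin d → ℤ) × κ → E :=
  fun p => tv (deltaV p.1) (b p.2)

/-- The Kraus operators `M^{(n)}_{x,y} = |δ_x⟩⟨δ_y| ⊗ C_n^{(x-y)}` if `x - y ∈ Λ^d`, else `0`. -/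
def Mop {d : ℕ} {Hd E : Type} [NormedAddCommGroup Hd] [InnerProductSpace ℂ Hd]
    [NormedAddCommGroup E] [InnerProductSpace ℂ E]
    (a : ℕ → ℋ →L[ℂ] ℋ) (tp : (Fin d → ℋ →L[ℂ] ℋ) → (Hd →L[ℂ] Hd)) (K : Hd ≃ₗᵢ[ℂ] ℋ)
    (top2 : (l2Z d →L[ℂ] l2Z d) → (ℋ →L[ℂ] ℋ) → (E →L[ℂ] E))
    (n : ℕ) (x y : Fin d → ℤ) : E →L[ℂ] E :=
  if x - y ∈ LamD d then top2 (dyad (deltaV x) (deltaV y)) (Cop a tp K n (x - y)) else 0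

/-- The 1-dimensional nucleus `ρ_σ` concentrated at `0` with value `|Z_σ⟩⟨Z_σ|`. -/
def rhoPoint (σ : Finset ℕ) : ℤ → ℋ →L[ℂ] ℋ := fun x => if x = 0 then dyad (Z σ) (Z σ) else 0

/-- `ℓ²(ℤ^d; ℋ)`, the space of square-summable `ℋ`-valued functions on `ℤ^d`. -/
abbrev l2ZH (d : ℕ) : Type := lp (fun _ : Fin d → ℤ => ℋ) 2
/-! ### Auxiliary development -/

open scoped symmDiff

local notation "⟪" x ", " y "⟫" => @inner ℂ _ _ x y

/-- The canonical Hilbert basis of `ℋ`, whose vectors are the `Z σ`. -/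
def hbZ : HilbertBasis (Finset ℕ) ℂ ℋ := default

lemma hbZ_coe (σ : Finset ℕ) : hbZ σ = Z σ := by
  rw [← hbZ.repr_symm_single σ]; rfl

lemma coe_hbZ : ⇑hbZ = Z := funext fun σ => hbZ_coe σ

lemma denseZ : Dense (Submodule.span ℂ (Set.range Z) : Set ℋ) := by
  rw [Submodule.dense_iff_topologicalClosure_eq_top]
  have := hbZ.dense_span
  rwa [coe_hbZ] at this

/-- Two operators agreeing on the basis agree. -/
lemma extZ {T S : ℋ →L[ℂ] ℋ} (h : ∀ σ, T (Z σ) = S (Z σ)) : T = S :=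
  ContinuousLinearMap.ext_on denseZ (by rintro _ ⟨σ, rfl⟩; exact h σ)

lemma hasSum_inner_Z (x y : ℋ) : HasSum (fun σ => ⟪x, Z σ⟫ * ⟪Z σ, y⟫) ⟪x, y⟫ := by
  have := hbZ.hasSum_inner_mul_inner x y
  simpa only [hbZ_coe] using this

section single
variable {a : ℕ → ℋ →L[ℂ] ℋ} (ha : QBN a)
include ha

lemma Sop_Z (n : ℕ) (σ : Finset ℕ) :
    (ContinuousLinearMap.adjoint (a n) + a n) (Z σ) = Z (σ ∆ {n}) := by
  classical
  rw [ContinuousLinearMap.add_apply, ha.1 n σ, ha.2 n σ]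
  by_cases h : n ∈ σ
  · rw [if_pos h, if_pos h, zero_add]
    congr 1
    ext k
    simp only [Finset.mem_erase, Finset.mem_symmDiff, Finset.mem_singleton]
    constructor
    · rintro ⟨hk, hσ⟩; exact Or.inl ⟨hσ, hk⟩
    · rintro (⟨hσ, hk⟩ | ⟨rfl, hσ⟩)
      · exact ⟨hk, hσ⟩
      · exact absurd h hσ
  · rw [if_neg h, if_neg h, add_zero]
    congr 1
    ext k
    simp only [Finset.mem_insert, Finset.mem_symmDiff, Finset.mem_singleton]
    constructor
    · rintro (rfl | hσ)
      · exact Or.inr ⟨rfl, h⟩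
      · by_cases hk : k = n
        · subst hk; exact absurd hσ h
        · exact Or.inl ⟨hσ, hk⟩
    · rintro (⟨hσ, hk⟩ | ⟨rfl, hσ⟩)
      · exact Or.inr hσ
      · exact Or.inl rfl

lemma Sop_sq (n : ℕ) :
    (ContinuousLinearMap.adjoint (a n) + a n) * (ContinuousLinearMap.adjoint (a n) + a n) = 1 := by
  apply extZ
  intro σ
  rw [ContinuousLinearMap.mul_apply, Sop_Z ha, Sop_Z ha, ContinuousLinearMap.one_apply,
    symmDiff_symmDiff_cancel_right]

lemma Sop_comm (m n : ℕ) :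
    (ContinuousLinearMap.adjoint (a m) + a m) * (ContinuousLinearMap.adjoint (a n) + a n) =
      (ContinuousLinearMap.adjoint (a n) + a n) * (ContinuousLinearMap.adjoint (a m) + a m) := by
  apply extZ
  intro σ
  rw [ContinuousLinearMap.mul_apply, ContinuousLinearMap.mul_apply, Sop_Z ha, Sop_Z ha,
    Sop_Z ha, Sop_Z ha, symmDiff_right_comm]

omit ha in
lemma Sop_adj (n : ℕ) :
    ContinuousLinearMap.adjoint (ContinuousLinearMap.adjoint (a n) + a n) =
      ContinuousLinearMap.adjoint (a n) + a n := by
  rw [map_add, ContinuousLinearMap.adjoint_adjoint, add_comm]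

end single
section LR
variable {a : ℕ → ℋ →L[ℂ] ℋ} (ha : QBN a)

/-- `|B|`: the projection `-L_n` or `R_n`. -/
def Pop (a : ℕ → ℋ →L[ℂ] ℋ) (n : ℕ) (e : ℤ) : ℋ →L[ℂ] ℋ :=
  if e = -1 then -Lop a n else Rop a n

/-- The sign `±1` attached to `B`. -/
def sg (e : ℤ) : ℂ := if e = -1 then -1 else 1

lemma Bop_eq_smul (n : ℕ) (e : ℤ) : Bop a n e = sg e • Pop a n e := by
  unfold Bop sg Pop
  by_cases h : e = -1 <;> simp [h]

lemma sg_mul_self (e : ℤ) : sg e * sg e = 1 := by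
  unfold sg; by_cases h : e = -1 <;> simp [h]

lemma sg_conj (e : ℤ) : (starRingEnd ℂ) (sg e) = sg e := by
  unfold sg; by_cases h : e = -1 <;> simp [h]

include ha

lemma Sop_apply_apply (n : ℕ) (x : ℋ) :
    (ContinuousLinearMap.adjoint (a n) + a n) ((ContinuousLinearMap.adjoint (a n) + a n) x)
      = x := by
  have := ContinuousLinearMap.ext_iff.mp (Sop_sq ha n) x
  rwa [ContinuousLinearMap.mul_apply, ContinuousLinearMap.one_apply] at this

lemma Sop_comm_apply (m n : ℕ) (x : ℋ) :
    (ContinuousLinearMap.adjoint (a m) + a m) ((ContinuousLinearMap.adjoint (a n) + a n) x)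
      = (ContinuousLinearMap.adjoint (a n) + a n)
          ((ContinuousLinearMap.adjoint (a m) + a m) x) := by
  have := ContinuousLinearMap.ext_iff.mp (Sop_comm ha m n) x
  rwa [ContinuousLinearMap.mul_apply, ContinuousLinearMap.mul_apply] at this

lemma Lop_mul_Rop (n : ℕ) : Lop a n * Rop a n = 0 := by
  refine ContinuousLinearMap.ext fun x => ?_
  set S := ContinuousLinearMap.adjoint (a n) + a n with hS
  simp only [Lop, Rop, ContinuousLinearMap.mul_apply, ContinuousLinearMap.smul_apply,
    ContinuousLinearMap.sub_apply, ContinuousLinearMap.add_apply, ContinuousLinearMap.one_apply,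
    ContinuousLinearMap.zero_apply, map_smul, map_add, map_sub, ← hS]
  rw [Sop_apply_apply ha]
  module

lemma Rop_mul_Lop (n : ℕ) : Rop a n * Lop a n = 0 := by
  refine ContinuousLinearMap.ext fun x => ?_
  set S := ContinuousLinearMap.adjoint (a n) + a n with hS
  simp only [Lop, Rop, ContinuousLinearMap.mul_apply, ContinuousLinearMap.smul_apply,
    ContinuousLinearMap.sub_apply, ContinuousLinearMap.add_apply, ContinuousLinearMap.one_apply,
    ContinuousLinearMap.zero_apply, map_smul, map_add, map_sub, ← hS]
  rw [Sop_apply_apply ha]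
  module

lemma Lop_sq (n : ℕ) : Lop a n * Lop a n = -Lop a n := by
  refine ContinuousLinearMap.ext fun x => ?_
  set S := ContinuousLinearMap.adjoint (a n) + a n with hS
  simp only [Lop, ContinuousLinearMap.mul_apply, ContinuousLinearMap.smul_apply,
    ContinuousLinearMap.sub_apply, ContinuousLinearMap.one_apply, ContinuousLinearMap.neg_apply,
    map_smul, map_sub, ← hS]
  rw [Sop_apply_apply ha]
  module

lemma Rop_sq (n : ℕ) : Rop a n * Rop a n = Rop a n := by
  refine ContinuousLinearMap.ext fun x => ?_
  set S := ContinuousLinearMap.adjoint (a n) + a n with hS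
  simp only [Rop, ContinuousLinearMap.mul_apply, ContinuousLinearMap.smul_apply,
    ContinuousLinearMap.add_apply, ContinuousLinearMap.one_apply, map_smul, map_add, ← hS]
  rw [Sop_apply_apply ha]
  module

omit ha in
lemma Lop_adj (n : ℕ) : ContinuousLinearMap.adjoint (Lop a n) = Lop a n := by
  rw [← ContinuousLinearMap.star_eq_adjoint]
  unfold Lop
  simp only [← ContinuousLinearMap.star_eq_adjoint, star_smul, star_sub, star_add, star_star,
    star_one]
  rw [show star ((2 : ℂ)⁻¹) = (2 : ℂ)⁻¹ by norm_num [Complex.star_def, map_inv₀]]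
  module

omit ha in
lemma Rop_adj (n : ℕ) : ContinuousLinearMap.adjoint (Rop a n) = Rop a n := by
  rw [← ContinuousLinearMap.star_eq_adjoint]
  unfold Rop
  simp only [← ContinuousLinearMap.star_eq_adjoint, star_smul, star_add, star_star, star_one]
  rw [show star ((2 : ℂ)⁻¹) = (2 : ℂ)⁻¹ by norm_num [Complex.star_def, map_inv₀]]
  module

omit ha in
lemma Pop_adj (n : ℕ) (e : ℤ) : ContinuousLinearMap.adjoint (Pop a n e) = Pop a n e := by
  unfold Pop
  by_cases h : e = -1 <;> simp [h, map_neg, Lop_adj, Rop_adj]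

lemma Pop_mul_self (n : ℕ) (e : ℤ) : Pop a n e * Pop a n e = Pop a n e := by
  unfold Pop
  by_cases h : e = -1 <;> simp [h, neg_mul, mul_neg, Lop_sq ha, Rop_sq ha]

lemma Pop_mul_ne (n : ℕ) {e e' : ℤ} (he : e ∈ Lam) (he' : e' ∈ Lam) (hne : e ≠ e') :
    Pop a n e * Pop a n e' = 0 := by
  unfold Pop
  rcases Finset.mem_insert.mp he with rfl | he
  · rcases Finset.mem_insert.mp he' with rfl | he'
    · exact absurd rfl hne
    · rw [Finset.mem_singleton] at he'
      subst he'
      simp [neg_mul, Lop_mul_Rop ha]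
  · rw [Finset.mem_singleton] at he
    subst he
    rcases Finset.mem_insert.mp he' with rfl | he'
    · simp [mul_neg, Rop_mul_Lop ha]
    · rw [Finset.mem_singleton] at he'
      subst he'
      exact absurd rfl hne

lemma Pop_comm (m n : ℕ) (e e' : ℤ) :
    Pop a m e * Pop a n e' = Pop a n e' * Pop a m e := by
  have key : ∀ x : ℋ, (Pop a m e) ((Pop a n e') x) = (Pop a n e') ((Pop a m e) x) := by
    intro x
    set S := ContinuousLinearMap.adjoint (a m) + a m with hS
    set T := ContinuousLinearMap.adjoint (a n) + a n with hT
    have hST : ∀ y : ℋ, S (T y) = T (S y) := Sop_comm_apply ha m n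
    unfold Pop Lop Rop
    by_cases h : e = -1 <;> by_cases h' : e' = -1 <;>
      simp only [h, h', if_pos, if_neg, not_false_iff, ContinuousLinearMap.neg_apply,
        ContinuousLinearMap.smul_apply, ContinuousLinearMap.sub_apply,
        ContinuousLinearMap.add_apply, ContinuousLinearMap.one_apply, map_neg, map_smul,
        map_sub, map_add, ← hS, ← hT, hST] <;> module
  refine ContinuousLinearMap.ext fun x => ?_
  rw [ContinuousLinearMap.mul_apply, ContinuousLinearMap.mul_apply, key]

end LR
section tensor

/-- Extend an inner-product identity from a spanning set to everything. -/
lemma inner_ext_dense {E : Type} [NormedAddCommGroup E] [InnerProductSpace ℂ E] {s : Set E}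
    (hs : Dense (Submodule.span ℂ s : Set E)) (T S : E →L[ℂ] E)
    (h : ∀ x ∈ s, ∀ y ∈ s, ⟪T x, y⟫ = ⟪x, S y⟫) : ∀ x y, ⟪T x, y⟫ = ⟪x, S y⟫ := by
  have step1 : ∀ y ∈ s, ∀ x, ⟪y, T x⟫ = ⟪S y, x⟫ := by
    intro y hy
    have : (innerSL ℂ y).comp T = innerSL ℂ (S y) := by
      refine ContinuousLinearMap.ext_on hs ?_
      intro x hx
      simp only [ContinuousLinearMap.comp_apply, innerSL_apply_apply]
      calc ⟪y, T x⟫ = (starRingEnd ℂ) ⟪T x, y⟫ := (inner_conj_symm _ _).symm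
        _ = (starRingEnd ℂ) ⟪x, S y⟫ := by rw [h x hx y hy]
        _ = ⟪S y, x⟫ := inner_conj_symm _ _
    intro x
    have := DFunLike.congr_fun this x
    simpa using this
  intro x y
  have : innerSL ℂ (T x) = (innerSL ℂ x).comp S := by
    refine ContinuousLinearMap.ext_on hs ?_
    intro y hy
    simp only [ContinuousLinearMap.comp_apply, innerSL_apply_apply]
    calc ⟪T x, y⟫ = (starRingEnd ℂ) ⟪y, T x⟫ := (inner_conj_symm _ _).symm
      _ = (starRingEnd ℂ) ⟪S y, x⟫ := by rw [step1 y hy x]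
      _ = ⟪x, S y⟫ := inner_conj_symm _ _
  have := DFunLike.congr_fun this y
  simpa using this

variable {d : ℕ} {Hd : Type} [NormedAddCommGroup Hd] [InnerProductSpace ℂ Hd]
  {tpv : MultilinearMap ℂ (fun _ : Fin d => ℋ) Hd}
  {tp : (Fin d → ℋ →L[ℂ] ℋ) → (Hd →L[ℂ] Hd)}
  (htp : IsTensorD tpv tp) (K : Hd ≃ₗᵢ[ℂ] ℋ)

include htp

lemma dense_tpv : Dense (Submodule.span ℂ (Set.range fun u => tpv u) : Set Hd) :=
  Submodule.dense_iff_topologicalClosure_eq_top.mpr htp.2.1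

/-- Two operators agreeing on elementary tensors agree. -/
lemma tp_ext {T S : Hd →L[ℂ] Hd} (h : ∀ u, T (tpv u) = S (tpv u)) : T = S :=
  ContinuousLinearMap.ext_on (dense_tpv htp) (by rintro _ ⟨u, rfl⟩; exact h u)

lemma tp_mul (A B : Fin d → ℋ →L[ℂ] ℋ) :
    tp A * tp B = tp (fun j => A j * B j) := by
  refine tp_ext htp fun u => ?_
  rw [ContinuousLinearMap.mul_apply, htp.2.2, htp.2.2, htp.2.2]
  simp only [ContinuousLinearMap.mul_apply]

lemma tp_smul (c : Fin d → ℂ) (A : Fin d → ℋ →L[ℂ] ℋ) :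
    tp (fun j => c j • A j) = (∏ j, c j) • tp A := by
  refine tp_ext htp fun u => ?_
  rw [htp.2.2, ContinuousLinearMap.smul_apply, htp.2.2]
  simp only [ContinuousLinearMap.smul_apply]
  exact tpv.map_smul_univ c fun j => A j (u j)

lemma tp_eq_zero (A : Fin d → ℋ →L[ℂ] ℋ) (j₀ : Fin d) (h : A j₀ = 0) : tp A = 0 := by
  refine tp_ext htp fun u => ?_
  rw [htp.2.2, ContinuousLinearMap.zero_apply]
  refine tpv.map_coord_zero j₀ ?_
  rw [h, ContinuousLinearMap.zero_apply]

lemma tp_adjoint [CompleteSpace Hd] (A : Fin d → ℋ →L[ℂ] ℋ) :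
    ContinuousLinearMap.adjoint (tp A) = tp (fun j => ContinuousLinearMap.adjoint (A j)) := by
  symm
  rw [ContinuousLinearMap.eq_adjoint_iff]
  refine inner_ext_dense (dense_tpv htp) _ _ ?_
  rintro _ ⟨u, rfl⟩ _ ⟨v, rfl⟩
  rw [htp.2.2, htp.2.2, htp.1, htp.1]
  exact Finset.prod_congr rfl fun j _ =>
    ContinuousLinearMap.adjoint_inner_left (A j) (v j) (u j)

omit htp

lemma conjK_inner_left (T : Hd →L[ℂ] Hd) (x : ℋ) (y : ℋ) :
    ⟪conjK K T x, y⟫ = ⟪T (K.symm x), K.symm y⟫ := by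
  unfold conjK
  simp only [ContinuousLinearMap.comp_apply, LinearIsometry.coe_toContinuousLinearMap,
    LinearIsometryEquiv.coe_toLinearIsometry]
  rw [show y = K (K.symm y) from (K.apply_symm_apply y).symm, K.inner_map_map,
    K.symm_apply_apply]

lemma conjK_mul (T T' : Hd →L[ℂ] Hd) : conjK K T * conjK K T' = conjK K (T * T') := by
  refine ContinuousLinearMap.ext fun x => ?_
  unfold conjK
  simp only [ContinuousLinearMap.mul_apply, ContinuousLinearMap.comp_apply,
    LinearIsometry.coe_toContinuousLinearMap, LinearIsometryEquiv.coe_toLinearIsometry,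
    LinearIsometryEquiv.symm_apply_apply]

lemma conjK_smul (c : ℂ) (T : Hd →L[ℂ] Hd) : conjK K (c • T) = c • conjK K T := by
  refine ContinuousLinearMap.ext fun x => ?_
  unfold conjK
  simp

lemma conjK_zero : conjK K (0 : Hd →L[ℂ] Hd) = 0 := by
  refine ContinuousLinearMap.ext fun x => ?_
  unfold conjK
  simp

lemma conjK_apply (T : Hd →L[ℂ] Hd) (x : ℋ) : conjK K T x = K (T (K.symm x)) := rfl

lemma conjK_adjoint [CompleteSpace Hd] (T : Hd →L[ℂ] Hd) :
    ContinuousLinearMap.adjoint (conjK K T) = conjK K (ContinuousLinearMap.adjoint T) := by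
  symm
  rw [ContinuousLinearMap.eq_adjoint_iff]
  intro x y
  calc ⟪conjK K (ContinuousLinearMap.adjoint T) x, y⟫
      = ⟪ContinuousLinearMap.adjoint T (K.symm x), K.symm y⟫ := conjK_inner_left K _ x y
    _ = ⟪K.symm x, T (K.symm y)⟫ :=
        ContinuousLinearMap.adjoint_inner_left T (K.symm y) (K.symm x)
    _ = ⟪x, K (T (K.symm y))⟫ := by rw [← K.inner_map_map, K.apply_symm_apply]
    _ = ⟪x, conjK K T y⟫ := by rw [conjK_apply]

end tensor
section Cfacts

variable {d : ℕ} {Hd : Type} [NormedAddCommGroup Hd] [InnerProductSpace ℂ Hd] [CompleteSpace Hd]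
  (a : ℕ → ℋ →L[ℂ] ℋ)
  {tpv : MultilinearMap ℂ (fun _ : Fin d => ℋ) Hd}
  (tp : (Fin d → ℋ →L[ℂ] ℋ) → (Hd →L[ℂ] Hd))
  (K : Hd ≃ₗᵢ[ℂ] ℋ)

/-- The positive part `K (|B|_1 ⊗ ⋯ ⊗ |B|_d) K⁻¹` of `C_n^{(ε)}`. -/
def PCop (n : ℕ) (v : Fin d → ℤ) : ℋ →L[ℂ] ℋ :=
  conjK K (tp fun j => Pop a n (v j))

/-- The global sign of `C_n^{(ε)}`. -/
def sgD (v : Fin d → ℤ) : ℂ := ∏ j, sg (v j)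

lemma sgD_mul_self (v : Fin d → ℤ) : sgD v * sgD v = 1 := by
  unfold sgD
  rw [← Finset.prod_mul_distrib]
  rw [show (fun j => sg (v j) * sg (v j)) = fun _ => (1 : ℂ) from
    funext fun j => sg_mul_self (v j)]
  simp

variable {a : ℕ → ℋ →L[ℂ] ℋ} (ha : QBN a) (htp : IsTensorD tpv tp)
include htp

lemma Cop_eq_smul (n : ℕ) (v : Fin d → ℤ) :
    Cop a tp K n v = sgD v • PCop a tp K n v := by
  unfold Cop PCop
  rw [show (fun j => Bop a n (v j)) = fun j => sg (v j) • Pop a n (v j) from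
    funext fun j => Bop_eq_smul n (v j)]
  rw [tp_smul htp, conjK_smul]
  rfl

lemma PCop_adj (n : ℕ) (v : Fin d → ℤ) :
    ContinuousLinearMap.adjoint (PCop a tp K n v) = PCop a tp K n v := by
  unfold PCop
  rw [conjK_adjoint, tp_adjoint htp]
  congr 1
  exact congrArg tp (funext fun j => Pop_adj n (v j))

include ha

lemma PCop_mul_self (n : ℕ) (v : Fin d → ℤ) :
    PCop a tp K n v * PCop a tp K n v = PCop a tp K n v := by
  unfold PCop
  rw [conjK_mul, tp_mul htp]
  congr 1
  exact congrArg tp (funext fun j => Pop_mul_self ha n (v j))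

lemma PCop_mul_ne (n : ℕ) {v v' : Fin d → ℤ} (hv : v ∈ LamD d) (hv' : v' ∈ LamD d)
    (hne : v ≠ v') : PCop a tp K n v * PCop a tp K n v' = 0 := by
  obtain ⟨j₀, hj₀⟩ : ∃ j, v j ≠ v' j := by
    by_contra h
    push_neg at h
    exact hne (funext h)
  unfold PCop
  rw [conjK_mul, tp_mul htp]
  rw [tp_eq_zero htp _ j₀ (Pop_mul_ne ha n (Fintype.mem_piFinset.mp hv j₀)
    (Fintype.mem_piFinset.mp hv' j₀) hj₀), conjK_zero]

lemma PCop_comm {m n : ℕ} (v v' : Fin d → ℤ) :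
    PCop a tp K m v * PCop a tp K n v' = PCop a tp K n v' * PCop a tp K m v := by
  unfold PCop
  rw [conjK_mul, conjK_mul, tp_mul htp, tp_mul htp]
  congr 1
  exact congrArg tp (funext fun j => Pop_comm ha m n (v j) (v' j))

omit ha in
lemma Cop_adj (n : ℕ) (v : Fin d → ℤ) :
    ContinuousLinearMap.adjoint (Cop a tp K n v) = Cop a tp K n v := by
  rw [Cop_eq_smul tp K htp, map_smulₛₗ, PCop_adj tp K htp, starRingEnd_apply]
  congr 1
  rw [← starRingEnd_apply]
  unfold sgD
  rw [map_prod]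
  exact Finset.prod_congr rfl fun j _ => sg_conj (v j)

end Cfacts
section traces

lemma dyad_apply {E : Type} [NormedAddCommGroup E] [InnerProductSpace ℂ E] (u v w : E) :
    dyad u v w = (⟪v, w⟫ : ℂ) • u := rfl

lemma conj_dyad (T : ℋ →L[ℂ] ℋ) (hT : ContinuousLinearMap.adjoint T = T) (u : ℋ) :
    T * dyad u u * T = dyad (T u) (T u) := by
  refine ContinuousLinearMap.ext fun w => ?_
  rw [ContinuousLinearMap.mul_apply, ContinuousLinearMap.mul_apply, dyad_apply, dyad_apply,
    map_smul]
  congr 1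
  rw [← ContinuousLinearMap.adjoint_inner_left T w u, hT]

lemma hasSum_dyad_diag (u : ℋ) :
    HasSum (fun σ => (⟪Z σ, dyad u u (Z σ)⟫ : ℂ).re) (‖u‖ ^ 2) := by
  have h := (hasSum_inner_Z u u).mapL Complex.reCLM
  have h2 : (fun σ => Complex.reCLM ((⟪u, Z σ⟫ : ℂ) * ⟪Z σ, u⟫)) =
      fun σ => (⟪Z σ, dyad u u (Z σ)⟫ : ℂ).re := by
    funext σ
    rw [dyad_apply, inner_smul_right]
    rfl
  rw [h2] at h
  have h3 : Complex.reCLM (⟪u, u⟫ : ℂ) = ‖u‖ ^ 2 := by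
    have := inner_self_eq_norm_sq (𝕜 := ℂ) u
    simpa [RCLike.re_to_complex] using this
  rwa [h3] at h

lemma trH_sum_dyad {ι : Type} [Fintype ι] (ξ : ι → ℋ) :
    trH (∑ i, dyad (ξ i) (ξ i)) = ∑ i, ‖ξ i‖ ^ 2 := by
  have key : HasSum (fun σ => (⟪Z σ, (∑ i, dyad (ξ i) (ξ i)) (Z σ)⟫ : ℂ).re)
      (∑ i, ‖ξ i‖ ^ 2) := by
    have h := hasSum_sum (f := fun i σ => (⟪Z σ, dyad (ξ i) (ξ i) (Z σ)⟫ : ℂ).re)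
      (a := fun i => ‖ξ i‖ ^ 2) (s := Finset.univ) (fun i _ => hasSum_dyad_diag (ξ i))
    convert h using 2 with σ
    rw [ContinuousLinearMap.sum_apply, inner_sum]
    exact Complex.re_sum _ _
  exact key.tsum_eq

lemma norm_sq_sum_orth {ι : Type} [Fintype ι] (ξ : ι → ℋ)
    (h : ∀ i j, i ≠ j → (⟪ξ i, ξ j⟫ : ℂ) = 0) :
    ‖∑ i, ξ i‖ ^ 2 = ∑ i, ‖ξ i‖ ^ 2 := by
  have h1 : (⟪∑ i, ξ i, ∑ i, ξ i⟫ : ℂ) = ∑ i, ⟪ξ i, ξ i⟫ := by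
    rw [sum_inner]
    refine Finset.sum_congr rfl fun i _ => ?_
    rw [inner_sum]
    rw [Finset.sum_eq_single i (fun j _ hj => h i j (Ne.symm hj)) (by simp)]
  have hns : ∀ u : ℋ, (⟪u, u⟫ : ℂ).re = ‖u‖ ^ 2 := by
    intro u
    have := inner_self_eq_norm_sq (𝕜 := ℂ) u
    simpa [RCLike.re_to_complex] using this
  have h2 := congrArg Complex.re h1
  rw [hns] at h2
  rw [h2, Complex.re_sum]
  exact Finset.sum_congr rfl fun i _ => hns (ξ i)

end traces
set_option synthInstance.maxHeartbeats 1000000 in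
/-- Speed up instance search for scalar actions on `ℋ →L[ℂ] ℋ`. -/
instance fastTowerCLM : IsScalarTower ℂ (ℋ →L[ℂ] ℋ) (ℋ →L[ℂ] ℋ) := inferInstance

set_option synthInstance.maxHeartbeats 1000000 in
/-- Speed up instance search for scalar actions on `ℋ →L[ℂ] ℋ`. -/
instance fastCommCLM : SMulCommClass ℂ (ℋ →L[ℂ] ℋ) (ℋ →L[ℂ] ℋ) := inferInstance

section Mon

variable {d : ℕ} {Hd : Type} [NormedAddCommGroup Hd] [InnerProductSpace ℂ Hd] [CompleteSpace Hd]
  (a : ℕ → ℋ →L[ℂ] ℋ)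
  (tp : (Fin d → ℋ →L[ℂ] ℋ) → (Hd →L[ℂ] Hd))
  (K : Hd ≃ₗᵢ[ℂ] ℋ)

/-- Monomials in the projections `PCop m ε` for times `m ≥ n`. -/
inductive IsMon : ℕ → (ℋ →L[ℂ] ℋ) → Prop
  | one (n : ℕ) : IsMon n 1
  | step {n : ℕ} {Q : ℋ →L[ℂ] ℋ} (m : ℕ) (hm : n ≤ m) (v : Fin d → ℤ) (hv : v ∈ LamD d)
      (hQ : IsMon n Q) : IsMon n (PCop a tp K m v * Q)

variable {a tp K}

lemma IsMon.mono {n : ℕ} {Q : ℋ →L[ℂ] ℋ} (h : IsMon a tp K (n + 1) Q) : IsMon a tp K n Q := by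
  induction h with
  | one => exact IsMon.one n
  | step m hm v hv hQ ih => exact IsMon.step m (Nat.le_of_succ_le hm) v hv ih

variable {tpv : MultilinearMap ℂ (fun _ : Fin d => ℋ) Hd}

lemma IsMon.comm (ha : QBN a) (htp : IsTensorD tpv tp) {n : ℕ} {Q : ℋ →L[ℂ] ℋ}
    (h : IsMon a tp K (n + 1) Q) (v : Fin d → ℤ) :
    Q * PCop a tp K n v = PCop a tp K n v * Q := by
  induction h with
  | one => rw [one_mul, mul_one]
  | step m hm w hw hQ ih =>
      rw [mul_assoc, ih, ← mul_assoc, ← mul_assoc, PCop_comm tp K ha htp]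

/-- The key sandwich computation, diagonal case. -/
lemma sandwich_diag (ha : QBN a) (htp : IsTensorD tpv tp) {n : ℕ} {Q : ℋ →L[ℂ] ℋ}
    (h : IsMon a tp K (n + 1) Q) {v : Fin d → ℤ} (hv : v ∈ LamD d) :
    Cop a tp K n v * Q * Cop a tp K n v = PCop a tp K n v * Q ∧
      IsMon a tp K n (PCop a tp K n v * Q) := by
  constructor
  · have hmul : PCop a tp K n v * Q * PCop a tp K n v = PCop a tp K n v * Q := by
      rw [mul_assoc, IsMon.comm ha htp h, ← mul_assoc, PCop_mul_self tp K ha htp]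
    rw [Cop_eq_smul tp K htp]
    simp only [smul_mul_assoc, mul_smul_comm, smul_smul]
    rw [hmul, sgD_mul_self, one_smul]
  · exact IsMon.step n le_rfl v hv h.mono

/-- The key sandwich computation, off-diagonal case. -/
lemma sandwich_ne (ha : QBN a) (htp : IsTensorD tpv tp) {n : ℕ} {Q : ℋ →L[ℂ] ℋ}
    (h : IsMon a tp K (n + 1) Q) {v v' : Fin d → ℤ} (hv : v ∈ LamD d) (hv' : v' ∈ LamD d)
    (hne : v ≠ v') : Cop a tp K n v * Q * Cop a tp K n v' = 0 := by
  have hmul : PCop a tp K n v * Q * PCop a tp K n v' = 0 := by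
    rw [mul_assoc, IsMon.comm ha htp h v', ← mul_assoc,
      PCop_mul_ne tp K ha htp n hv hv' hne, zero_mul]
  rw [Cop_eq_smul tp K htp, Cop_eq_smul tp K htp]
  simp only [smul_mul_assoc, mul_smul_comm, smul_smul]
  rw [hmul, smul_zero]

end Mon
/-- If the open QBN walk starts from `ω⁽⁰⁾(x) = |W_0(x)⟩⟨W_0(x)|`, where `W_0` is the (unit)
initial state of the unitary `d`-dimensional QBN walk `W_{n+1}(x) = ∑_ε C_n^{(ε)} W_n(x-ε)`,
then at every time `n` and site `x` one has `Tr[ω⁽ⁿ⁾(x)] = ‖W_n(x)‖²`. -/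
theorem stmt19 (a : ℕ → ℋ →L[ℂ] ℋ) (ha : QBN a)
    (d : ℕ) (hd : 2 ≤ d)
    (Hd : Type) [NormedAddCommGroup Hd] [InnerProductSpace ℂ Hd] [CompleteSpace Hd]
    (tpv : MultilinearMap ℂ (fun _ : Fin d => ℋ) Hd)
    (tp : (Fin d → ℋ →L[ℂ] ℋ) → (Hd →L[ℂ] Hd))
    (htp : IsTensorD tpv tp)
    (K : Hd ≃ₗᵢ[ℂ] ℋ)
    (W : ℕ → l2ZH d) (hW0 : ‖W 0‖ = 1)
    (hWev : ∀ (n : ℕ) (x : Fin d → ℤ),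
      (W (n + 1)) x = ∑ v ∈ LamD d, Cop a tp K n v ((W n) (x - v)))
    (ω : ℕ → (Fin d → ℤ) → ℋ →L[ℂ] ℋ)
    (hev : ∀ n : ℕ, ω (n + 1) = JmapD a tp K n (ω n))
    (hinit : ∀ x : Fin d → ℤ, ω 0 x = dyad ((W 0) x) ((W 0) x)) :
    ∀ (n : ℕ) (x : Fin d → ℤ), trH (ω n x) = ‖(W n) x‖ ^ 2 := by
  classical
  suffices h : ∀ n : ℕ, ∃ (m : ℕ) (ξ : Fin m → (Fin d → ℤ) → ℋ),
      (∀ x, ω n x = ∑ i, dyad (ξ i x) (ξ i x)) ∧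
      (∀ x, (W n) x = ∑ i, ξ i x) ∧
      (∀ (x : Fin d → ℤ) (i j : Fin m), i ≠ j → ∀ Q : ℋ →L[ℂ] ℋ, IsMon a tp K n Q →
        (@inner ℂ _ _ (ξ i x) (Q (ξ j x))) = 0) by
    intro n x
    obtain ⟨m, ξ, h1, h2, h3⟩ := h n
    have hp : ∀ i j : Fin m, i ≠ j → (@inner ℂ _ _ (ξ i x) (ξ j x)) = 0 := by
      intro i j hij
      have := h3 x i j hij 1 (IsMon.one n)
      simpa using this
    rw [h1 x, h2 x, trH_sum_dyad, norm_sq_sum_orth _ hp]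
  intro n
  induction n with
  | zero =>
      refine ⟨1, fun _ x => (W 0) x, ?_, ?_, ?_⟩
      · intro x
        rw [hinit x, Fin.sum_univ_one]
      · intro x
        rw [Fin.sum_univ_one]
      · intro x i j hij
        exact absurd (Subsingleton.elim i j) hij
  | succ n ih =>
      obtain ⟨m, ξ, h1, h2, h3⟩ := ih
      set ι' := {v // v ∈ LamD d} × Fin m with hι'
      let e := Fintype.equivFin ι'
      set F : ι' → (Fin d → ℤ) → ℋ :=
        fun p x => Cop a tp K n p.1.1 (ξ p.2 (x - p.1.1)) with hF
      refine ⟨Fintype.card ι', fun k => F (e.symm k), ?_, ?_, ?_⟩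
      · intro x
        show ω (n + 1) x = ∑ k : Fin (Fintype.card ι'), dyad (F (e.symm k) x) (F (e.symm k) x)
        rw [hev n]
        show (∑ v ∈ LamD d, Cop a tp K n v * ω n (x - v) * Cop a tp K n v) = _
        rw [Equiv.sum_comp e.symm fun p => dyad (F p x) (F p x)]
        rw [Fintype.sum_prod_type]
        have hcoe : (∑ v : {v // v ∈ LamD d}, ∑ i : Fin m, dyad (F (⟨v, i⟩ : ι') x)
              (F (⟨v, i⟩ : ι') x)) =
            ∑ v ∈ LamD d, ∑ i : Fin m, dyad (Cop a tp K n v (ξ i (x - v)))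
              (Cop a tp K n v (ξ i (x - v))) :=
          Finset.sum_coe_sort (LamD d) fun v => ∑ i : Fin m,
            dyad (Cop a tp K n v (ξ i (x - v))) (Cop a tp K n v (ξ i (x - v)))
        rw [hcoe]
        refine Finset.sum_congr rfl fun v hv => ?_
        rw [h1 (x - v), Finset.mul_sum, Finset.sum_mul]
        refine Finset.sum_congr rfl fun i _ => ?_
        exact conj_dyad _ (Cop_adj tp K htp n v) _
      · intro x
        show (W (n + 1)) x = ∑ k : Fin (Fintype.card ι'), F (e.symm k) x
        rw [hWev n x]
        rw [Equiv.sum_comp e.symm fun p => F p x]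
        rw [Fintype.sum_prod_type]
        have hcoe : (∑ v : {v // v ∈ LamD d}, ∑ i : Fin m, F (⟨v, i⟩ : ι') x) =
            ∑ v ∈ LamD d, ∑ i : Fin m, Cop a tp K n v (ξ i (x - v)) :=
          Finset.sum_coe_sort (LamD d) fun v => ∑ i : Fin m, Cop a tp K n v (ξ i (x - v))
        rw [hcoe]
        refine Finset.sum_congr rfl fun v hv => ?_
        rw [h2 (x - v), map_sum]
      · intro x k l hkl Q hQ
        show (@inner ℂ _ _ (F (e.symm k) x) (Q (F (e.symm l) x))) = 0
        have hne : e.symm k ≠ e.symm l := fun hc => hkl (e.symm.injective hc)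
        rcases hpk : e.symm k with ⟨⟨v, hv⟩, i⟩
        rcases hql : e.symm l with ⟨⟨v', hv'⟩, j⟩
        rw [hpk, hql] at hne
        show (@inner ℂ _ _ (Cop a tp K n v (ξ i (x - v)))
          (Q (Cop a tp K n v' (ξ j (x - v'))))) = 0
        have step1 : (@inner ℂ _ _ (Cop a tp K n v (ξ i (x - v)))
            (Q (Cop a tp K n v' (ξ j (x - v'))))) =
            (@inner ℂ _ _ (ξ i (x - v))
              ((Cop a tp K n v * Q * Cop a tp K n v') (ξ j (x - v')))) := by
          conv_lhs => rw [← Cop_adj tp K htp n v]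
          rw [ContinuousLinearMap.adjoint_inner_left]
          rfl
        rw [step1]
        by_cases hvv : v = v'
        · subst hvv
          have hij : i ≠ j := by
            intro hc
            exact hne (by rw [hc])
          obtain ⟨heq, hmon⟩ := sandwich_diag ha htp hQ hv
          rw [heq]
          exact h3 (x - v) i j hij _ hmon
        · rw [sandwich_ne ha htp hQ hv hv' hvv]
          simp
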